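/- Let w be a weight function on V² that is not identically zero, and let 0 < η ≤ 1. Then for every partition 𝒜₀ of V there exists an η-fat partition 𝒜 of V, each of whose parts is a union of parts of 𝒜₀, such that q_𝒜(w) > q_{𝒜₀}(w) − 2η. In particular, there exists an η-fat partition 𝒜 of V with q_𝒜(w) > q*(w) − 2η. -/

import Mathlib

open Finset
open scoped Classical

/-- The weighted degree deg_w(u) = Σ_v w(u,v). -/
noncomputable def wDeg {V : Type} [Fintype V] (w : V → V → ℝ) (u : V) : ℝ :=
  ∑ v, w u v

/-- The weighted volume vol_w(X) = Σ_{u∈X} deg_w(u). -/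
noncomputable def wVol {V : Type} [Fintype V] (w : V → V → ℝ) (X : Finset V) : ℝ :=
  ∑ u ∈ X, wDeg w u

/-- The weighted edge count e_w(A) = (1/2)·Σ_{u,v∈A} w(u,v). -/
noncomputable def wEdge {V : Type} [Fintype V] (w : V → V → ℝ) (A : Finset V) : ℝ :=
  (1 / 2) * ∑ u ∈ A, ∑ v ∈ A, w u v

/-- The weighted modularity score q_𝒜(w) of a partition 𝒜 of V; it is 0 if
vol_w(V) = 0 (for nonnegative w this means w is identically zero). -/
noncomputable def wModScore {V : Type} [Fintype V] [DecidableEq V] (w : V → V → ℝ)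
    (P : Finpartition (univ : Finset V)) : ℝ :=
  if wVol w univ = 0 then 0 else
    (∑ A ∈ P.parts, 2 * wEdge w A) / wVol w univ
      - (∑ A ∈ P.parts, (wVol w A) ^ 2) / (wVol w univ) ^ 2

/-- The weighted modularity q*(w) = max_𝒜 q_𝒜(w). -/
noncomputable def wModularity {V : Type} [Fintype V] [DecidableEq V] (w : V → V → ℝ) : ℝ :=
  ⨆ P : Finpartition (univ : Finset V), wModScore w P

/-- The probability that the random weight function w_p (each unordered pair of
vertices independently keeps its w-value with probability p and is set to 0
otherwise) satisfies the predicate Q. -/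
noncomputable def wProb {V : Type} [Fintype V] [DecidableEq V] (w : V → V → ℝ) (p : ℝ)
    (Q : (V → V → ℝ) → Prop) : ℝ :=
  ∑ S ∈ (univ : Finset (Sym2 V)).powerset,
    if Q (fun u v => if s(u, v) ∈ S then w u v else 0) then
      p ^ S.card * (1 - p) ^ (Fintype.card (Sym2 V) - S.card)
    else 0

section SubsetSum

variable {ι : Type*} [DecidableEq ι]

/-- If all items are nonnegative and at most `t`, and no subset sum lies in `(a, a+t]`,
then the total sum is at most `a`. -/
lemma lemA0 (v : ι → ℝ) (t a : ℝ) (ha : 0 ≤ a) :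
    ∀ X : Finset ι, (∀ i ∈ X, 0 ≤ v i) → (∀ i ∈ X, v i ≤ t) →
      (∀ Y ⊆ X, ¬ (a < ∑ i ∈ Y, v i ∧ ∑ i ∈ Y, v i ≤ a + t)) →
      ∑ i ∈ X, v i ≤ a := by
  intro X
  induction X using Finset.strongInduction with
  | _ X ih =>
    intro hnn hle avoid
    rcases X.eq_empty_or_nonempty with rfl | ⟨x, hx⟩
    · simpa
    · have hsub : X.erase x ⊂ X := Finset.erase_ssubset hx
      have ih' : ∑ i ∈ X.erase x, v i ≤ a :=
        ih _ hsub (fun i hi => hnn i (Finset.mem_of_mem_erase hi))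
          (fun i hi => hle i (Finset.mem_of_mem_erase hi))
          (fun Y hY => avoid Y (hY.trans (Finset.erase_subset _ _)))
      have hsum : ∑ i ∈ X, v i = v x + ∑ i ∈ X.erase x, v i :=
        (Finset.add_sum_erase _ _ hx).symm
      by_contra hgt
      push_neg at hgt
      exact avoid X (Finset.Subset.refl X) ⟨hgt, by have := hle x hx; linarith⟩

/-- If no subset sum lies in `(a, a+t]`, then `t * (total - a) ≤ Σ v²`. -/
lemma lemA (v : ι → ℝ) (t a : ℝ) (ht : 0 ≤ t) (ha : 0 ≤ a) :
    ∀ X : Finset ι, (∀ i ∈ X, 0 ≤ v i) →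
      (∀ Y ⊆ X, ¬ (a < ∑ i ∈ Y, v i ∧ ∑ i ∈ Y, v i ≤ a + t)) →
      t * ((∑ i ∈ X, v i) - a) ≤ ∑ i ∈ X, (v i) ^ 2 := by
  intro X
  induction X using Finset.strongInduction with
  | _ X ih =>
    intro hnn avoid
    by_cases hbig : ∃ i ∈ X, t < v i
    · obtain ⟨i, hi, hti⟩ := hbig
      have hsub : X.erase i ⊂ X := Finset.erase_ssubset hi
      have ih' := ih _ hsub (fun j hj => hnn j (Finset.mem_of_mem_erase hj))
        (fun Y hY => avoid Y (hY.trans (Finset.erase_subset _ _)))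
      have hsum : ∑ j ∈ X, v j = v i + ∑ j ∈ X.erase i, v j :=
        (Finset.add_sum_erase _ _ hi).symm
      have hsq : ∑ j ∈ X, (v j) ^ 2 = (v i) ^ 2 + ∑ j ∈ X.erase i, (v j) ^ 2 :=
        (Finset.add_sum_erase _ _ hi).symm
      nlinarith [hnn i hi]
    · push_neg at hbig
      have := lemA0 v t a ha X hnn hbig avoid
      have hsq : (0:ℝ) ≤ ∑ i ∈ X, (v i) ^ 2 :=
        Finset.sum_nonneg fun i _ => sq_nonneg _
      nlinarith

/-- Key lemma: if nonnegative items have total `s > 2h` and no subset sum lies in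
`[h, s - h]`, then `s * (s - 2h) < Σ v²`. -/
lemma lemB (v : ι → ℝ) (h : ℝ) (hh : 0 < h) (X : Finset ι)
    (hnn : ∀ i ∈ X, 0 ≤ v i) (hs : 2 * h < ∑ i ∈ X, v i)
    (avoid : ∀ Y ⊆ X, ¬ (h ≤ ∑ i ∈ Y, v i ∧ ∑ i ∈ Y, v i ≤ (∑ i ∈ X, v i) - h)) :
    (∑ i ∈ X, v i) * ((∑ i ∈ X, v i) - 2 * h) < ∑ i ∈ X, (v i) ^ 2 := by
  set s : ℝ := ∑ i ∈ X, v i with hs_def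
  -- find a minimal-cardinality subset with sum ≥ h
  have hXmem : X ∈ X.powerset.filter (fun P => h ≤ ∑ i ∈ P, v i) := by
    simp [Finset.mem_filter, Finset.mem_powerset]
    linarith
  obtain ⟨P₀, hP₀mem, hP₀min⟩ := Finset.exists_min_image _ (fun P => P.card) ⟨X, hXmem⟩
  rw [Finset.mem_filter, Finset.mem_powerset] at hP₀mem
  obtain ⟨hP₀X, hP₀h⟩ := hP₀mem
  have hP₀ne : P₀.Nonempty := by
    rcases P₀.eq_empty_or_nonempty with rfl | hne
    · simp at hP₀h; linarith
    · exact hne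
  -- sums of proper subsets of P₀ (erase) are < h
  have herase : ∀ x ∈ P₀, ∑ i ∈ P₀.erase x, v i < h := by
    intro x hx
    by_contra hge
    push_neg at hge
    have hmem : P₀.erase x ∈ X.powerset.filter (fun P => h ≤ ∑ i ∈ P, v i) := by
      rw [Finset.mem_filter, Finset.mem_powerset]
      exact ⟨(Finset.erase_subset _ _).trans hP₀X, hge⟩
    have := hP₀min _ hmem
    have hcard : (P₀.erase x).card < P₀.card :=
      Finset.card_erase_lt_of_mem hx
    omega
  -- x : minimizer of v on P₀
  obtain ⟨x, hxP₀, hxmin⟩ := Finset.exists_min_image P₀ v hP₀ne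
  set P : Finset ι := P₀.erase x with hP_def
  set p : ℝ := ∑ i ∈ P, v i with hp_def
  have hpx : v x + p = ∑ i ∈ P₀, v i := Finset.add_sum_erase _ _ hxP₀
  have hph : p < h := herase x hxP₀
  have hpnn : 0 ≤ p := Finset.sum_nonneg fun i hi =>
    hnn i (hP₀X (Finset.mem_of_mem_erase hi))
  -- P₀'s sum is > s - h
  have hP₀gt : s - h < v x + p := by
    rw [hpx]
    by_contra hle'
    push_neg at hle'
    exact avoid P₀ hP₀X ⟨hP₀h, hle'⟩
  have hvx_pos : 0 < v x := by
    have : h ≤ v x + p := by rw [hpx]; exact hP₀h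
    linarith
  -- the rest R
  set R : Finset ι := X \ P₀ with hR_def
  have hRsum : ∑ i ∈ R, v i + ∑ i ∈ P₀, v i = s := Finset.sum_sdiff hP₀X
  set r : ℝ := ∑ i ∈ R, v i with hr_def
  have hr_eq : r = s - (v x + p) := by rw [hpx]; linarith
  -- avoid condition for R, shifted by p
  have avoidR : ∀ Y ⊆ R, ¬ ((h - p) < ∑ i ∈ Y, v i ∧
      ∑ i ∈ Y, v i ≤ (h - p) + (s - 2 * h)) := by
    rintro Y hYR ⟨hY1, hY2⟩
    have hdisj : Disjoint P Y := by
      have h1 : Disjoint P₀ Y := by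
        refine Finset.disjoint_left.2 fun i hiP hiY => ?_
        have := hYR hiY
        rw [hR_def, Finset.mem_sdiff] at this
        exact this.2 hiP
      exact h1.mono_left (Finset.erase_subset _ _)
    have hPY : P ∪ Y ⊆ X := Finset.union_subset
      ((Finset.erase_subset _ _).trans hP₀X) (hYR.trans (Finset.sdiff_subset))
    have hsumPY : ∑ i ∈ P ∪ Y, v i = p + ∑ i ∈ Y, v i := by
      rw [Finset.sum_union hdisj]
    refine avoid (P ∪ Y) hPY ⟨?_, ?_⟩
    · rw [hsumPY]; linarith
    · rw [hsumPY]; linarith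
  have hRnn : ∀ i ∈ R, 0 ≤ v i := fun i hi => hnn i (Finset.sdiff_subset hi)
  have ht : (0:ℝ) ≤ s - 2 * h := by linarith
  have hap : (0:ℝ) ≤ h - p := by linarith
  have hlemA := lemA v (s - 2 * h) (h - p) ht hap R hRnn avoidR
  -- lower bound on Σ_P v²
  have hSP : v x * p ≤ ∑ i ∈ P, (v i) ^ 2 := by
    rw [hp_def, Finset.mul_sum]
    refine Finset.sum_le_sum fun i hi => ?_
    have h1 : v x ≤ v i := hxmin i (Finset.mem_of_mem_erase hi)
    have h2 : 0 ≤ v i := hnn i (hP₀X (Finset.mem_of_mem_erase hi))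
    nlinarith
  -- decompose Σ_X v²
  have hsq_split : ∑ i ∈ X, (v i) ^ 2
      = (∑ i ∈ R, (v i) ^ 2) + ((v x) ^ 2 + ∑ i ∈ P, (v i) ^ 2) := by
    have h1 : (∑ i ∈ R, (v i) ^ 2) + ∑ i ∈ P₀, (v i) ^ 2 = ∑ i ∈ X, (v i) ^ 2 :=
      Finset.sum_sdiff hP₀X
    have h2 : (v x) ^ 2 + ∑ i ∈ P, (v i) ^ 2 = ∑ i ∈ P₀, (v i) ^ 2 :=
      Finset.add_sum_erase _ (fun i => (v i) ^ 2) hxP₀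
    linarith
  have hvx_big : s - 2 * h < v x := by linarith
  -- final algebra
  rw [hsq_split]
  nlinarith [mul_pos hvx_pos (by linarith : (0:ℝ) < v x + p - (s - h)),
    mul_nonneg hap hvx_pos.le]

end SubsetSum

section Fattening

variable {V : Type} [Fintype V] [DecidableEq V] [Nonempty V]
set_option linter.unusedSectionVars false

lemma wVol_nonneg (w : V → V → ℝ) (hnn : ∀ u v, 0 ≤ w u v) (X : Finset V) :
    0 ≤ wVol w X :=
  Finset.sum_nonneg fun u _ => Finset.sum_nonneg fun v _ => hnn u v

lemma wVol_univ_pos (w : V → V → ℝ) (hnn : ∀ u v, 0 ≤ w u v)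
    (hnz : ∃ u v, w u v ≠ 0) : 0 < wVol w univ := by
  obtain ⟨u0, v0, hne⟩ := hnz
  refine Finset.sum_pos' (fun u _ => Finset.sum_nonneg fun v _ => hnn u v) ⟨u0, mem_univ _, ?_⟩
  exact Finset.sum_pos' (fun v _ => hnn u0 v)
    ⟨v0, mem_univ _, lt_of_le_of_ne (hnn u0 v0) (Ne.symm hne)⟩

lemma parts_biUnion (P : Finpartition (univ : Finset V)) :
    P.parts.biUnion id = univ := by
  ext u
  simp only [Finset.mem_biUnion, id, mem_univ, iff_true]
  obtain ⟨t, ht, hut⟩ := P.exists_mem (mem_univ u)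
  exact ⟨t, ht, hut⟩

lemma sum_parts_vertex (P : Finpartition (univ : Finset V)) (g : V → ℝ) :
    ∑ s ∈ P.parts, ∑ u ∈ s, g u = ∑ u, g u := by
  conv_rhs => rw [← parts_biUnion P]
  rw [Finset.sum_biUnion P.disjoint]
  simp only [id]

lemma part_eq_biUnion_filter {A₀ A : Finpartition (univ : Finset V)} (hle : A₀ ≤ A)
    {s : Finset V} (hs : s ∈ A.parts) :
    (A₀.parts.filter (· ⊆ s)).biUnion id = s := by
  apply Finset.Subset.antisymm
  · exact Finset.biUnion_subset.2 fun b hb => (Finset.mem_filter.1 hb).2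
  · intro u hu
    obtain ⟨b, hb, hub⟩ := A₀.exists_mem (mem_univ u)
    obtain ⟨c, hc, hbc⟩ := hle hb
    have hbc' : b ⊆ c := Finset.le_iff_subset.1 hbc
    have hcs : c = s := A.eq_of_mem_parts hc hs (hbc' hub) hu
    rw [Finset.mem_biUnion]
    exact ⟨b, Finset.mem_filter.2 ⟨hb, by rw [← hcs]; exact hbc'⟩, hub⟩

lemma vol_biUnion (w : V → V → ℝ) {T : Finset (Finset V)}
    (hdisj : Set.PairwiseDisjoint (↑T) (id : Finset V → Finset V)) :
    wVol w (T.biUnion id) = ∑ b ∈ T, wVol w b := by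
  unfold wVol
  rw [Finset.sum_biUnion hdisj]
  simp only [id]

lemma fiber_sum {A₀ A : Finpartition (univ : Finset V)} (hle : A₀ ≤ A)
    (g : Finset V → ℝ) :
    ∑ b ∈ A₀.parts, g b = ∑ s ∈ A.parts, ∑ b ∈ A₀.parts.filter (· ⊆ s), g b := by
  have hrw : ∀ s : Finset V, ∑ b ∈ A₀.parts.filter (· ⊆ s), g b
      = ∑ b ∈ A₀.parts, if b ⊆ s then g b else 0 := fun s => Finset.sum_filter _ _
  simp_rw [hrw]
  rw [Finset.sum_comm]
  refine (Finset.sum_congr rfl fun b hb => ?_).symm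
  obtain ⟨c, hc, hbc⟩ := hle hb
  have hbc' : b ⊆ c := Finset.le_iff_subset.1 hbc
  have hbne : b.Nonempty := Finset.nonempty_iff_ne_empty.2 (by
    simpa using A₀.ne_bot hb)
  obtain ⟨u, hu⟩ := hbne
  rw [Finset.sum_eq_single_of_mem c hc]
  · rw [if_pos hbc']
  · intro s hs hne
    rw [if_neg]
    intro hbs
    exact hne (A.eq_of_mem_parts hs hc (hbs hu) (hbc' hu))

lemma mk_split (A : Finpartition (univ : Finset V)) {s U : Finset V} (hs : s ∈ A.parts)
    (hUs : U ⊆ s) (hU : U.Nonempty) (hsU : (s \ U).Nonempty) :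
    ∃ A' : Finpartition (univ : Finset V),
      A'.parts = insert U (insert (s \ U) (A.parts.erase s)) := by
  have hdisjU' : Disjoint U (s \ U) := Finset.disjoint_sdiff
  have holdd : ∀ c ∈ A.parts.erase s, Disjoint s c := fun c hc =>
    A.disjoint hs (Finset.mem_of_mem_erase hc) (Finset.ne_of_mem_erase hc).symm
  refine ⟨⟨insert U (insert (s \ U) (A.parts.erase s)), ?_, ?_, ?_⟩, rfl⟩
  · rw [Finset.supIndep_iff_pairwiseDisjoint]
    intro x hx y hy hxy
    simp only [Finset.coe_insert, Set.mem_insert_iff, Finset.mem_coe] at hx hy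
    rcases hx with rfl | rfl | hx
    · rcases hy with rfl | rfl | hy
      · exact absurd rfl hxy
      · exact hdisjU'
      · exact ((holdd y hy).mono_left hUs)
    · rcases hy with rfl | rfl | hy
      · exact hdisjU'.symm
      · exact absurd rfl hxy
      · exact ((holdd y hy).mono_left Finset.sdiff_subset)
    · rcases hy with rfl | rfl | hy
      · exact ((holdd x hx).mono_left hUs).symm
      · exact ((holdd x hx).mono_left Finset.sdiff_subset).symm
      · exact A.disjoint (Finset.mem_of_mem_erase hx) (Finset.mem_of_mem_erase hy) hxy
  · rw [Finset.sup_insert, Finset.sup_insert, ← sup_assoc]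
    have h2 : (id U : Finset V) ⊔ id (s \ U) = s := by
      simp only [id_eq, Finset.sup_eq_union]
      exact Finset.union_sdiff_of_subset hUs
    rw [h2]
    conv_rhs => rw [← A.sup_parts, ← Finset.insert_erase hs, Finset.sup_insert]
    simp only [id]
  · intro hmem
    rcases Finset.mem_insert.1 hmem with h1 | h1
    · exact hU.ne_empty h1.symm
    · rcases Finset.mem_insert.1 h1 with h2 | h2
      · exact hsU.ne_empty h2.symm
      · exact A.bot_notMem (Finset.mem_of_mem_erase h2)

end Fattening

section Main

variable {V : Type} [Fintype V] [DecidableEq V] [Nonempty V]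
set_option linter.unusedSectionVars false
set_option maxHeartbeats 1000000

lemma fattening (w : V → V → ℝ) (hnn : ∀ u v, 0 ≤ w u v) (hnz : ∃ u v, w u v ≠ 0)
    (η : ℝ) (hη0 : 0 < η) (hη1 : η ≤ 1) (A₀ : Finpartition (univ : Finset V)) :
    ∃ A : Finpartition (univ : Finset V), A₀ ≤ A ∧
      (∀ s ∈ A.parts, η * wVol w univ ≤ wVol w s) ∧
      wModScore w A₀ - 2 * η < wModScore w A := by
  have hvV : 0 < wVol w univ := wVol_univ_pos w hnn hnz
  set h : ℝ := η * wVol w univ with hh_def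
  have hh : 0 < h := mul_pos hη0 hvV
  have huniv_ne : (univ : Finset V) ≠ ⊥ := Finset.univ_nonempty.ne_empty
  let good : Finpartition (univ : Finset V) → Prop :=
    fun A => A₀ ≤ A ∧ ∀ s ∈ A.parts, h ≤ wVol w s
  have hindis : good (Finpartition.indiscrete huniv_ne) := by
    constructor
    · intro b hb
      exact ⟨univ, by simp [Finpartition.indiscrete], A₀.le hb⟩
    · intro s hs
      simp only [Finpartition.indiscrete_parts, Finset.mem_singleton] at hs
      subst hs
      nlinarith
  haveI hne_good : Nonempty {A : Finpartition (univ : Finset V) // good A} := ⟨⟨_, hindis⟩⟩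
  obtain ⟨⟨A, hAgood⟩, hmin⟩ := Finite.exists_min
    (fun A : {A : Finpartition (univ : Finset V) // good A} =>
      ∑ s ∈ A.1.parts, (wVol w s) ^ 2)
  obtain ⟨hle, hfat⟩ := hAgood
  -- the avoid property from minimality
  have avoid : ∀ s ∈ A.parts, ∀ T ⊆ A₀.parts.filter (· ⊆ s),
      ¬ (h ≤ ∑ b ∈ T, wVol w b ∧ ∑ b ∈ T, wVol w b ≤ wVol w s - h) := by
    rintro s hs T hT ⟨h1, h2⟩
    set U : Finset V := T.biUnion id with hU_def
    have hTparts : T ⊆ A₀.parts := hT.trans (Finset.filter_subset _ _)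
    have hdisjT : Set.PairwiseDisjoint (↑T) (id : Finset V → Finset V) :=
      A₀.disjoint.subset (Finset.coe_subset.2 hTparts)
    have hUvol : wVol w U = ∑ b ∈ T, wVol w b := vol_biUnion w hdisjT
    have hUs : U ⊆ s := Finset.biUnion_subset.2 fun b hb => (Finset.mem_filter.1 (hT hb)).2
    have h0 : wVol w (∅ : Finset V) = 0 := by simp [wVol]
    have hUne : U.Nonempty := by
      rw [Finset.nonempty_iff_ne_empty]
      intro hUe
      rw [hUe, h0] at hUvol
      linarith
    have hvolsU : wVol w (s \ U) = wVol w s - wVol w U := by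
      have hsd := Finset.sum_sdiff (f := wDeg w) hUs
      show (∑ u ∈ s \ U, wDeg w u) = (∑ u ∈ s, wDeg w u) - ∑ u ∈ U, wDeg w u
      linarith
    have hsUne : (s \ U).Nonempty := by
      rw [Finset.nonempty_iff_ne_empty]
      intro hUe
      rw [hUe, h0] at hvolsU
      rw [hUvol] at hvolsU
      linarith
    obtain ⟨A', hA'parts⟩ := mk_split A hs hUs hUne hsUne
    -- distinctness facts
    have hUneq : U ≠ s \ U := by
      intro heq
      have : Disjoint U U := by
        conv_rhs => rw [heq]
        exact Finset.disjoint_sdiff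
      exact hUne.ne_empty (by simpa using disjoint_self.mp this)
    have hUnotin : U ∉ A.parts.erase s := by
      intro hmem
      have hdisj : Disjoint s U :=
        A.disjoint hs (Finset.mem_of_mem_erase hmem) (Finset.ne_of_mem_erase hmem).symm
      obtain ⟨u, hu⟩ := hUne
      exact Finset.disjoint_left.1 hdisj (hUs hu) hu
    have hsUnotin : s \ U ∉ A.parts.erase s := by
      intro hmem
      have hdisj : Disjoint s (s \ U) :=
        A.disjoint hs (Finset.mem_of_mem_erase hmem) (Finset.ne_of_mem_erase hmem).symm
      obtain ⟨u, hu⟩ := hsUne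
      exact Finset.disjoint_left.1 hdisj (Finset.sdiff_subset hu) hu
    have hUnotin2 : U ∉ insert (s \ U) (A.parts.erase s) := by
      rw [Finset.mem_insert]
      rintro (heq | hmem)
      · exact hUneq heq
      · exact hUnotin hmem
    -- A' is good
    have hgood' : good A' := by
      constructor
      · intro b hb
        obtain ⟨c, hc, hbc⟩ := hle hb
        have hbc' : b ⊆ c := Finset.le_iff_subset.1 hbc
        by_cases hcs : c = s
        · subst hcs
          by_cases hbT : b ∈ T
          · refine ⟨U, ?_, ?_⟩
            · rw [hA'parts]; exact Finset.mem_insert_self _ _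
            · exact Finset.le_iff_subset.2 (Finset.subset_biUnion_of_mem id hbT)
          · refine ⟨c \ U, ?_, ?_⟩
            · rw [hA'parts]
              exact Finset.mem_insert.2 (Or.inr (Finset.mem_insert_self _ _))
            · refine Finset.le_iff_subset.2 fun u hu => Finset.mem_sdiff.2 ⟨hbc' hu, ?_⟩
              intro huU
              obtain ⟨b', hb'T, hub'⟩ := Finset.mem_biUnion.1 huU
              have : b' = b := A₀.eq_of_mem_parts (hTparts hb'T) hb hub' hu
              exact hbT (this ▸ hb'T)
        · refine ⟨c, ?_, hbc⟩
          rw [hA'parts]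
          exact Finset.mem_insert.2 (Or.inr (Finset.mem_insert.2
            (Or.inr (Finset.mem_erase.2 ⟨hcs, hc⟩))))
      · intro x hx
        rw [hA'parts] at hx
        rcases Finset.mem_insert.1 hx with rfl | hx1
        · rw [hUvol]; exact h1
        · rcases Finset.mem_insert.1 hx1 with rfl | hx2
          · rw [hvolsU, hUvol]; linarith
          · exact hfat x (Finset.mem_of_mem_erase hx2)
    -- strictly smaller sum of squares
    have hFlt : ∑ x ∈ A'.parts, (wVol w x) ^ 2 < ∑ x ∈ A.parts, (wVol w x) ^ 2 := by
      rw [hA'parts, Finset.sum_insert hUnotin2, Finset.sum_insert hsUnotin]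
      conv_rhs => rw [← Finset.insert_erase hs, Finset.sum_insert (Finset.notMem_erase _ _)]
      have e1 : wVol w (s \ U) = wVol w s - wVol w U := hvolsU
      have e2 : h ≤ wVol w U := by rw [hUvol]; exact h1
      have e3 : h ≤ wVol w s - wVol w U := by rw [hUvol]; linarith
      nlinarith [mul_pos (lt_of_lt_of_le hh e2) (lt_of_lt_of_le hh e3)]
    exact absurd (hmin ⟨A', hgood'⟩) (not_le.2 hFlt)
  -- per-part volume decomposition
  have volsplit : ∀ s ∈ A.parts,
      wVol w s = ∑ b ∈ A₀.parts.filter (· ⊆ s), wVol w b := by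
    intro s hs
    conv_lhs => rw [← part_eq_biUnion_filter hle hs]
    exact vol_biUnion w (A₀.disjoint.subset (Finset.coe_subset.2 (Finset.filter_subset _ _)))
  -- the per-part key inequality
  have key : ∀ s ∈ A.parts,
      (wVol w s) ^ 2 - 2 * h * wVol w s
        < ∑ b ∈ A₀.parts.filter (· ⊆ s), (wVol w b) ^ 2 := by
    intro s hs
    have hsvol : h ≤ wVol w s := hfat s hs
    have hspos : 0 < wVol w s := lt_of_lt_of_le hh hsvol
    have hnnb : ∀ b ∈ A₀.parts.filter (· ⊆ s), 0 ≤ wVol w b :=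
      fun b _ => wVol_nonneg w hnn b
    by_cases hcase : wVol w s ≤ 2 * h
    · have hex : ∃ b ∈ A₀.parts.filter (· ⊆ s), 0 < wVol w b := by
        by_contra hc
        push_neg at hc
        have hle0 : ∑ b ∈ A₀.parts.filter (· ⊆ s), wVol w b ≤ 0 :=
          Finset.sum_nonpos hc
        rw [← volsplit s hs] at hle0
        linarith
      obtain ⟨b, hb, hbpos⟩ := hex
      have hsingle : (wVol w b) ^ 2 ≤ ∑ b ∈ A₀.parts.filter (· ⊆ s), (wVol w b) ^ 2 :=
        Finset.single_le_sum (f := fun c => (wVol w c) ^ 2) (fun i _ => sq_nonneg _) hb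
      nlinarith
    · push_neg at hcase
      have hB := lemB (wVol w) h hh (A₀.parts.filter (· ⊆ s)) hnnb
        (by rw [← volsplit s hs]; exact hcase)
        (by
          intro Y hY hcon
          refine avoid s hs Y hY ⟨hcon.1, ?_⟩
          have := hcon.2
          rwa [← volsplit s hs] at this)
      rw [← volsplit s hs] at hB
      nlinarith [hB]
  -- summing up
  have hApartsne : A.parts.Nonempty := A.parts_nonempty huniv_ne
  have hsum_lt : ∑ s ∈ A.parts, ((wVol w s) ^ 2 - 2 * h * wVol w s)
      < ∑ s ∈ A.parts, ∑ b ∈ A₀.parts.filter (· ⊆ s), (wVol w b) ^ 2 :=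
    Finset.sum_lt_sum_of_nonempty hApartsne key
  have hfib := fiber_sum hle (fun b => (wVol w b) ^ 2)
  have hvolsum : ∑ s ∈ A.parts, wVol w s = wVol w univ := by
    unfold wVol
    exact sum_parts_vertex A (wDeg w)
  have hF : ∑ s ∈ A.parts, (wVol w s) ^ 2
      < (∑ b ∈ A₀.parts, (wVol w b) ^ 2) + 2 * h * wVol w univ := by
    have hdistrib : ∑ s ∈ A.parts, ((wVol w s) ^ 2 - 2 * h * wVol w s)
        = (∑ s ∈ A.parts, (wVol w s) ^ 2) - 2 * h * wVol w univ := by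
      rw [Finset.sum_sub_distrib, ← Finset.mul_sum, hvolsum]
    rw [hdistrib, ← hfib] at hsum_lt
    linarith
  -- edge comparison
  have hedge : ∑ b ∈ A₀.parts, wEdge w b ≤ ∑ s ∈ A.parts, wEdge w s := by
    rw [fiber_sum hle (wEdge w)]
    refine Finset.sum_le_sum fun s hs => ?_
    have hbi := part_eq_biUnion_filter hle hs
    have hdisj : Set.PairwiseDisjoint (↑(A₀.parts.filter (· ⊆ s)))
        (id : Finset V → Finset V) :=
      A₀.disjoint.subset (Finset.coe_subset.2 (Finset.filter_subset _ _))
    unfold wEdge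
    rw [← Finset.mul_sum]
    gcongr (1/2) * ?_
    conv_rhs => rw [← hbi]
    rw [Finset.sum_biUnion hdisj]
    refine Finset.sum_le_sum fun b hb => ?_
    simp only [id]
    refine Finset.sum_le_sum fun u hu => ?_
    refine Finset.sum_le_sum_of_subset_of_nonneg ?_ (fun v _ _ => hnn u v)
    exact Finset.subset_biUnion_of_mem id hb
  -- final computation
  refine ⟨A, hle, fun s hs => hfat s hs, ?_⟩
  unfold wModScore
  rw [if_neg (ne_of_gt hvV), if_neg (ne_of_gt hvV)]
  have hme : ∀ P : Finpartition (univ : Finset V),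
      ∑ B ∈ P.parts, 2 * wEdge w B = 2 * ∑ B ∈ P.parts, wEdge w B :=
    fun P => (Finset.mul_sum _ _ _).symm
  rw [hme, hme]
  have hv2 : (0:ℝ) < (wVol w univ) ^ 2 := by positivity
  have t1 : 2 * (∑ b ∈ A₀.parts, wEdge w b) / wVol w univ
      ≤ 2 * (∑ s ∈ A.parts, wEdge w s) / wVol w univ := by
    rw [div_le_div_iff_of_pos_right hvV]
    linarith
  have t2 : (∑ s ∈ A.parts, (wVol w s) ^ 2) / (wVol w univ) ^ 2
      < (∑ b ∈ A₀.parts, (wVol w b) ^ 2) / (wVol w univ) ^ 2 + 2 * η := by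
    have hF' : ∑ s ∈ A.parts, (wVol w s) ^ 2
        < (∑ b ∈ A₀.parts, (wVol w b) ^ 2) + 2 * η * (wVol w univ) ^ 2 := by
      have : 2 * h * wVol w univ = 2 * η * (wVol w univ) ^ 2 := by
        rw [hh_def]; ring
      linarith [hF]
    have := div_lt_div_of_pos_right hF' hv2
    rw [add_div] at this
    rw [mul_div_assoc, div_self (ne_of_gt hv2), mul_one] at this
    exact this
  linarith

end Main

theorem statement13 (V : Type) [Fintype V] [DecidableEq V] [Nonempty V] (w : V → V → ℝ)
    (hsym : ∀ u v, w u v = w v u) (hnn : ∀ u v, 0 ≤ w u v) (hdiag : ∀ v, w v v = 0)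
    (hnz : ∃ u v, w u v ≠ 0) (η : ℝ) (hη0 : 0 < η) (hη1 : η ≤ 1) :
    (∀ A₀ : Finpartition (univ : Finset V),
      ∃ A : Finpartition (univ : Finset V), A₀ ≤ A ∧
        (∀ s ∈ A.parts, η * wVol w univ ≤ wVol w s) ∧
        wModScore w A₀ - 2 * η < wModScore w A) ∧
    (∃ A : Finpartition (univ : Finset V),
      (∀ s ∈ A.parts, η * wVol w univ ≤ wVol w s) ∧
      wModularity w - 2 * η < wModScore w A) := by
  constructor
  · exact fun A₀ => fattening w hnn hnz η hη0 hη1 A₀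
  · haveI : Nonempty (Finpartition (univ : Finset V)) :=
      ⟨Finpartition.indiscrete (Finset.univ_nonempty.ne_empty)⟩
    obtain ⟨P₀, hP₀⟩ := Finite.exists_max
      (fun P : Finpartition (univ : Finset V) => wModScore w P)
    obtain ⟨A, _, hfat, hsc⟩ := fattening w hnn hnz η hη0 hη1 P₀
    refine ⟨A, hfat, ?_⟩
    have hsup : wModularity w ≤ wModScore w P₀ := ciSup_le hP₀
    linarith
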